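/- Every finite subgroup of GL(3, ℤ) is solvable. -/

import Mathlib

open Matrix Finset

namespace Stmt8Aux

lemma dvd_mul_entries {d e : ℤ} {X Y : Matrix (Fin 3) (Fin 3) ℤ}
    (hX : ∀ i j, d ∣ X i j) (hY : ∀ i j, e ∣ Y i j) (i j : Fin 3) :
    d * e ∣ (X * Y) i j := by
  rw [Matrix.mul_apply]
  exact Finset.dvd_sum fun k _ => mul_dvd_mul (hX i k) (hY k j)

lemma dvd_pow_entries {d : ℤ} {B : Matrix (Fin 3) (Fin 3) ℤ}
    (hB : ∀ i j, d ∣ B i j) : ∀ (k : ℕ) (i j : Fin 3), d ^ k ∣ (B ^ k) i j := by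
  intro k
  induction k with
  | zero => intro i j; simp
  | succ k ih =>
      intro i j
      rw [pow_succ, pow_succ]
      exact dvd_mul_entries ih hB i j

lemma mul_natCast_entry (X : Matrix (Fin 3) (Fin 3) ℤ) (c : ℕ) (i j : Fin 3) :
    (X * (c : Matrix (Fin 3) (Fin 3) ℤ)) i j = (c : ℤ) * X i j := by
  rw [show ((c : Matrix (Fin 3) (Fin 3) ℤ)) = c • (1 : Matrix (Fin 3) (Fin 3) ℤ) by
    simp [nsmul_eq_mul], mul_smul_comm, mul_one, Matrix.smul_apply, nsmul_eq_mul]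

lemma step {p q : ℕ} (hp : p.Prime) (hp2 : p ≠ 2) (hq : q.Prime)
    {B : Matrix (Fin 3) (Fin 3) ℤ} (hBq : (1 + B) ^ q = 1)
    {N : ℕ} (hN : 1 ≤ N) (hB : ∀ i j, (p : ℤ) ^ N ∣ B i j) :
    ∀ i j, (p : ℤ) ^ (N + 1) ∣ B i j := by
  intro i j
  obtain ⟨r, rfl⟩ : ∃ r, q = r + 2 := ⟨q - 2, by have := hq.two_le; omega⟩
  have expand := (Commute.one_left B).add_pow (r + 2)
  rw [hBq] at expand
  simp only [one_pow, one_mul] at expand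
  rw [Finset.sum_range_succ, Finset.sum_range_succ] at expand
  have h1 : (r + 2) - (r + 1) = 1 := by omega
  have h2 : (r + 2) - (r + 2) = 0 := by omega
  rw [h1, h2, pow_zero, pow_one, Nat.choose_self, Nat.choose_succ_self_right,
    Nat.cast_one, mul_one] at expand
  set S : Matrix (Fin 3) (Fin 3) ℤ :=
    ∑ m ∈ Finset.range (r + 1),
      B ^ (r + 2 - m) * (((r + 2).choose m : ℕ) : Matrix (Fin 3) (Fin 3) ℤ) with hS
  have h0 : S + B * (((r + 2 : ℕ) : ℕ) : Matrix (Fin 3) (Fin 3) ℤ) = 0 :=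
    add_eq_right.mp expand.symm
  have hkey : ((r + 2 : ℕ) : ℤ) * B i j = - S i j := by
    have := congrArg (fun M => M i j) h0
    simp only [Matrix.add_apply, Matrix.zero_apply, mul_natCast_entry] at this
    linarith
  -- divisibility of powers of B
  have hpow2 : ∀ m, m ≤ r → (p : ℤ) ^ (2 * N) ∣ (B ^ (r + 2 - m)) i j := by
    intro m hm
    have he : r + 2 - m = 2 + (r - m) := by omega
    rw [he, pow_add]
    have := dvd_mul_entries (X := B ^ 2) (Y := B ^ (r - m))
      (dvd_pow_entries hB 2) (fun i j => one_dvd _) i j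
    rw [mul_one] at this
    rwa [← pow_mul, Nat.mul_comm] at this

  by_cases hqp : r + 2 = p
  · -- q = p case
    subst hqp
    have hp3 : 3 ≤ r + 2 := by have := hp.two_le; omega
    have hSdvd : ((r + 2 : ℕ) : ℤ) ^ (N + 2) ∣ S i j := by
      rw [hS]
      simp only [Matrix.sum_apply]
      refine Finset.dvd_sum fun m hm => ?_
      rw [mul_natCast_entry]
      rcases Nat.eq_zero_or_pos m with rfl | hm1
      · have he : r + 2 - 0 = 3 + (r - 1) := by omega
        have h3 : ((r + 2 : ℕ) : ℤ) ^ (3 * N) ∣ (B ^ (r + 2 - 0)) i j := by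
          rw [he, pow_add]
          have := dvd_mul_entries (X := B ^ 3) (Y := B ^ (r - 1))
            (dvd_pow_entries hB 3) (fun i j => one_dvd _) i j
          rw [mul_one] at this
          rwa [← pow_mul, Nat.mul_comm] at this
        exact ((pow_dvd_pow _ (by omega : N + 2 ≤ 3 * N)).trans h3).mul_left _
      · have hmr : m ≤ r := by have := Finset.mem_range.mp hm; omega
        have hc : (r + 2) ∣ (r + 2).choose m :=
          hp.dvd_choose_self (by omega) (by omega)
        rw [pow_succ']
        exact mul_dvd_mul (Int.natCast_dvd_natCast.mpr hc)
          ((pow_dvd_pow _ (by omega : N + 1 ≤ 2 * N)).trans (hpow2 m hmr))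
    have hstep : ((r + 2 : ℕ) : ℤ) * ((r + 2 : ℕ) : ℤ) ^ (N + 1) ∣
        ((r + 2 : ℕ) : ℤ) * B i j := by
      rw [hkey, ← pow_succ']
      exact hSdvd.neg_right
    exact (mul_dvd_mul_iff_left (by exact_mod_cast hp.pos.ne' : ((r + 2 : ℕ) : ℤ) ≠ 0)).mp hstep
  · -- q ≠ p case
    have hSdvd : (p : ℤ) ^ (N + 1) ∣ S i j := by
      rw [hS]
      simp only [Matrix.sum_apply]
      refine Finset.dvd_sum fun m hm => ?_
      rw [mul_natCast_entry]
      exact ((pow_dvd_pow _ (by omega : N + 1 ≤ 2 * N)).trans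
        (hpow2 m (by simpa using Nat.lt_succ_iff.mp (Finset.mem_range.mp hm)))).mul_left _
    have hcop : IsCoprime ((p : ℤ) ^ (N + 1)) ((r + 2 : ℕ) : ℤ) := by
      rw [show ((p : ℤ) ^ (N + 1)) = ((p ^ (N + 1) : ℕ) : ℤ) by push_cast; ring]
      rw [Nat.isCoprime_iff_coprime]
      exact Nat.Coprime.pow_left _ (hp.coprime_iff_not_dvd.mpr fun hdvd =>
        hqp ((Nat.prime_dvd_prime_iff_eq hp hq).mp hdvd).symm)
    exact hcop.dvd_of_dvd_mul_left (hkey ▸ hSdvd.neg_right)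

lemma matrix_eq_one {p : ℕ} (hp : p.Prime) (hp2 : p ≠ 2) {q : ℕ} (hq : q.Prime)
    {A : Matrix (Fin 3) (Fin 3) ℤ} (hA : A ^ q = 1)
    (h1 : ∀ i j, (p : ℤ) ∣ (A - 1) i j) : A = 1 := by
  set B : Matrix (Fin 3) (Fin 3) ℤ := A - 1 with hB
  have hAB : A = 1 + B := by rw [hB]; abel
  rw [hAB] at hA
  have hall : ∀ N : ℕ, ∀ i j, (p : ℤ) ^ (N + 1) ∣ B i j := by
    intro N
    induction N with
    | zero => intro i j; simpa using h1 i j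
    | succ N ih => exact step hp hp2 hq hA (by omega) ih
  have hzero : ∀ i j, B i j = 0 := by
    intro i j
    by_contra hne
    have hle : ∀ N : ℕ, ((p : ℤ) ^ (N + 1)) ≤ |B i j| := fun N =>
      Int.le_of_dvd (abs_pos.mpr hne) ((dvd_abs _ _).mpr (hall N i j))
    set N := (B i j).natAbs with hNdef
    have habs : |B i j| = (N : ℤ) := Int.abs_eq_natAbs _
    have h2 : N < p ^ (N + 1) :=
      lt_of_lt_of_le (Nat.lt_two_pow_self (n := N))
        (le_trans (Nat.pow_le_pow_right (by norm_num) (by omega))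
          (Nat.pow_le_pow_left hp.two_le _))
    have h3 := hle N
    rw [habs] at h3
    have hcast : ((p ^ (N + 1) : ℕ) : ℤ) ≤ (N : ℤ) := by push_cast; exact h3
    exact absurd (Int.ofNat_le.mp hcast) (by omega)
  have : B = 0 := by ext i j; exact hzero i j
  rw [hAB, this, add_zero]

lemma gl_eq_one {p : ℕ} [Fact p.Prime] (hp2 : p ≠ 2) (a : GL (Fin 3) ℤ)
    (ha : IsOfFinOrder a)
    (h : Matrix.GeneralLinearGroup.map (Int.castRingHom (ZMod p)) a = 1) : a = 1 := by
  by_contra hne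
  have hp : p.Prime := Fact.out
  set n := orderOf a with hn
  have hn0 : 0 < n := ha.orderOf_pos
  have hn1 : n ≠ 1 := fun h' => hne (orderOf_eq_one_iff.mp h')
  set q := n.minFac with hqdef
  have hq : q.Prime := Nat.minFac_prime hn1
  set b := a ^ (n / q) with hb
  have hbq : b ^ q = 1 := by
    rw [hb, ← pow_mul, Nat.div_mul_cancel (Nat.minFac_dvd n), pow_orderOf_eq_one]
  have hbmap : Matrix.GeneralLinearGroup.map (Int.castRingHom (ZMod p)) b = 1 := by
    rw [hb, map_pow, h, one_pow]
  have hcong : ∀ i j, (p : ℤ) ∣ ((b : Matrix (Fin 3) (Fin 3) ℤ) - 1) i j := by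
    intro i j
    have e1 : (((b : Matrix (Fin 3) (Fin 3) ℤ) i j : ℤ) : ZMod p)
        = (1 : Matrix (Fin 3) (Fin 3) (ZMod p)) i j := by
      rw [show ((((b : Matrix (Fin 3) (Fin 3) ℤ) i j : ℤ) : ZMod p))
          = Matrix.GeneralLinearGroup.map (Int.castRingHom (ZMod p)) b i j from
        (Matrix.GeneralLinearGroup.map_apply (Int.castRingHom (ZMod p)) i j b).symm, hbmap]
      rfl
    have e2 : ((((b : Matrix (Fin 3) (Fin 3) ℤ) - 1) i j : ℤ) : ZMod p) = 0 := by
      rw [Matrix.sub_apply, Int.cast_sub, e1]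
      by_cases hij : i = j <;> simp [Matrix.one_apply, hij]
    exact (ZMod.intCast_zmod_eq_zero_iff_dvd _ p).mp e2
  have hbqM : (b : Matrix (Fin 3) (Fin 3) ℤ) ^ q = 1 := by
    have := congrArg Units.val hbq
    simpa using this
  have hb1 : b = 1 := Units.ext (matrix_eq_one hp hp2 hq hbqM hcong)
  rw [hb] at hb1
  have hdvd : n ∣ n / q := orderOf_dvd_of_pow_eq_one hb1
  have hlt : n / q < n := Nat.div_lt_self hn0 hq.one_lt
  have hge : n ≤ n / q := Nat.le_of_dvd (Nat.div_pos (Nat.minFac_le hn0) hq.pos) hdvd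
  omega

lemma perm_card3_solvable (X : Type*) [Finite X] (h3 : Nat.card X = 3) :
    IsSolvable (Equiv.Perm X) := by
  classical
  have : Fintype X := Fintype.ofFinite X
  haveI : Fact (Nat.Prime 3) := ⟨by norm_num⟩
  have hX : Fintype.card X = 3 := by rw [← Nat.card_eq_fintype_card, h3]
  haveI : Nontrivial X := Fintype.one_lt_card_iff_nontrivial.mp (by omega)
  have hA : Nat.card (alternatingGroup X) = 3 := by
    have h2 := two_mul_card_alternatingGroup (α := X)
    rw [Fintype.card_perm, hX] at h2
    rw [Nat.card_eq_fintype_card]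
    have : (3 : ℕ).factorial = 6 := by decide
    omega
  haveI : IsCyclic (alternatingGroup X) := isCyclic_of_prime_card hA
  haveI : IsSolvable (alternatingGroup X) := by
    letI := IsCyclic.commGroup (α := (alternatingGroup X))
    exact isSolvable_of_comm fun a b => mul_comm a b
  exact solvable_of_ker_le_range (alternatingGroup X).subtype Equiv.Perm.sign
    (le_of_eq (Subgroup.range_subtype _).symm)

lemma solvable_of_card_dvd_96 (G : Type*) [Group G] (h : Nat.card G ∣ 96) :
    IsSolvable G := by
  have hne : Nat.card G ≠ 0 := by
    rintro h0
    rw [h0] at h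
    norm_num at h
  haveI : Finite G := Nat.finite_of_card_ne_zero hne
  haveI : Fact (Nat.Prime 2) := ⟨Nat.prime_two⟩
  obtain ⟨P⟩ : Nonempty (Sylow 2 G) := inferInstance
  have hind2 : ¬ 2 ∣ (P : Subgroup G).index := P.not_dvd_index
  have hind96 : (P : Subgroup G).index ∣ 96 :=
    (Subgroup.index_dvd_card (H := (P : Subgroup G))).trans h
  have hind3 : (P : Subgroup G).index ∣ 3 := by
    have hcop : Nat.Coprime ((P : Subgroup G).index) (2 ^ 5) :=
      Nat.Coprime.pow_right _ ((Nat.prime_two.coprime_iff_not_dvd).mpr hind2).symm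
    rw [show (96 : ℕ) = 3 * 2 ^ 5 by norm_num] at hind96
    exact hcop.dvd_of_dvd_mul_right hind96
  rcases (Nat.dvd_prime Nat.prime_three).mp hind3 with h1 | h3
  · -- index 1: G is a 2-group
    have hPtop : (P : Subgroup G) = ⊤ := Subgroup.index_eq_one.mp h1
    have hG2 : IsPGroup 2 G := (hPtop ▸ P.isPGroup').of_equiv Subgroup.topEquiv
    haveI := hG2.isNilpotent
    exact (inferInstance : Group.IsSolvable G)
  · -- index 3
    set φ := MulAction.toPermHom G (G ⧸ (P : Subgroup G)) with hφ
    have hker : φ.ker = (P : Subgroup G).normalCore := (Subgroup.normalCore_eq_ker _).symm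
    have hkerle : φ.ker ≤ (P : Subgroup G) := hker ▸ Subgroup.normalCore_le _
    haveI : Group.IsSolvable φ.ker := by
      haveI := (P.isPGroup'.to_le hkerle).isNilpotent
      infer_instance
    haveI : Group.IsSolvable (Equiv.Perm (G ⧸ (P : Subgroup G))) :=
      perm_card3_solvable _ (by rw [← Subgroup.index_eq_card]; exact h3)
    exact solvable_of_ker_le_range φ.ker.subtype φ (le_of_eq (Subgroup.range_subtype _).symm)

end Stmt8Aux

open Stmt8Aux in
/-- Every finite subgroup of `GL(3, ℤ)` is solvable. -/
theorem stmt_8 (H : Subgroup (Matrix.GeneralLinearGroup (Fin 3) ℤ)) (hH : Finite H) :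
    IsSolvable H := by
  have cardGL : ∀ p : ℕ, p.Prime → p ≠ 2 →
      Nat.card H ∣ Nat.card (GL (Fin 3) (ZMod p)) := by
    intro p hp hp2
    haveI : Fact p.Prime := ⟨hp⟩
    set f := (Matrix.GeneralLinearGroup.map (Int.castRingHom (ZMod p))).comp H.subtype with hf
    have hinj : Function.Injective f := by
      rw [injective_iff_map_eq_one]
      intro x hx
      have hfin : IsOfFinOrder ((x : GL (Fin 3) ℤ)) :=
        H.subtype.isOfFinOrder (isOfFinOrder_of_finite x)
      have := gl_eq_one hp2 (x : GL (Fin 3) ℤ) hfin hx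
      exact Subtype.ext this
    exact Subgroup.card_dvd_of_injective f hinj
  have c3 : Nat.card (GL (Fin 3) (ZMod 3)) = 11232 := by
    haveI : Fact (Nat.Prime 3) := ⟨by norm_num⟩
    rw [Matrix.card_GL_field]
    simp [Fin.prod_univ_three, ZMod.card]
  have c5 : Nat.card (GL (Fin 3) (ZMod 5)) = 1488000 := by
    haveI : Fact (Nat.Prime 5) := ⟨by norm_num⟩
    rw [Matrix.card_GL_field]
    simp [Fin.prod_univ_three, ZMod.card]
  have hdvd : Nat.card H ∣ Nat.gcd 11232 1488000 :=
    Nat.dvd_gcd (c3 ▸ cardGL 3 (by norm_num) (by norm_num))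
      (c5 ▸ cardGL 5 (by norm_num) (by norm_num))
  have hg : Nat.gcd 11232 1488000 = 96 := by norm_num
  exact solvable_of_card_dvd_96 _ (hg ▸ hdvd)
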